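/- Let s ∈ ℂ with Re s < 0, let α > 0 and d > 0. Then ∫_0^d sin(αx) x^{-s-1} dx = (α d^{1-s}/(1-s)) · ∑_{n=0}^∞ (((1-s)/2)_n / ((3/2)_n · (1 + (1-s)/2)_n)) · (-α²d²/4)^n / n!, where (z)_n = Γ(z+n)/Γ(z) is the Pochhammer symbol. -/

import Mathlib

/-- Pochhammer symbol `(z)_n = Γ(z+n)/Γ(z)`. -/
noncomputable def poch (z : ℂ) (n : ℕ) : ℂ := Complex.Gamma (z + n) / Complex.Gamma z

lemma add_nat_ne_zero {z : ℂ} (hz : 0 < z.re) (n : ℕ) : z + (n : ℂ) ≠ 0 := by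
  intro h
  have : (z + (n : ℂ)).re = 0 := by rw [h]; simp
  simp only [Complex.add_re, Complex.natCast_re] at this
  have : (0:ℝ) ≤ (n:ℝ) := Nat.cast_nonneg n
  linarith [Complex.natCast_re n ▸ (by simp : ((n:ℂ)).re = (n:ℝ))]

lemma poch_zero {z : ℂ} (hz : 0 < z.re) : poch z 0 = 1 := by
  unfold poch
  simp [div_self (Complex.Gamma_ne_zero_of_re_pos hz)]

lemma poch_succ {z : ℂ} (hz : 0 < z.re) (n : ℕ) : poch z (n + 1) = (z + n) * poch z n := by
  unfold poch
  rw [show (z + ((n : ℕ) + 1 : ℕ) : ℂ) = (z + n) + 1 by push_cast; ring,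
    Complex.Gamma_add_one _ (add_nat_ne_zero hz n), mul_div_assoc]

lemma poch_three_halves (n : ℕ) : poch (3/2) n = ((2*n+1).factorial : ℂ) / (4^n * (n.factorial : ℂ)) := by
  have h32 : (0:ℝ) < (3/2 : ℂ).re := by norm_num
  induction n with
  | zero => simp [poch_zero h32]
  | succ n ih =>
    rw [poch_succ h32 n, ih]
    have h1 : (2*(n+1)+1).factorial = (2*n+3) * ((2*n+2) * (2*n+1).factorial) := by
      rw [show 2*(n+1)+1 = (2*n+2)+1 by ring, Nat.factorial_succ, Nat.factorial_succ]
    have hc1 : (((2*(n+1)+1).factorial : ℕ) : ℂ) = (2*(n:ℂ)+3) * ((2*n+2) * ((2*n+1).factorial : ℕ)) := by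
      rw [h1]; push_cast; ring
    have hc2 : (((n+1).factorial : ℕ) : ℂ) = ((n:ℂ)+1) * (n.factorial : ℕ) := by
      rw [Nat.factorial_succ]; push_cast; ring
    rw [hc1, hc2, pow_succ]
    have h4 : (4:ℂ)^n ≠ 0 := by norm_num
    have hf2 : ((n.factorial : ℕ) : ℂ) ≠ 0 := Nat.cast_ne_zero.2 (Nat.factorial_ne_zero _)
    have hn1 : ((n:ℂ)+1) ≠ 0 := by
      intro h
      have := congrArg Complex.re h
      simp only [Complex.add_re, Complex.natCast_re, Complex.one_re, Complex.zero_re] at this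
      have : (0:ℝ) ≤ (n:ℝ) := Nat.cast_nonneg n
      linarith
    push_cast
    field_simp
    ring

lemma poch_ratio {z : ℂ} (hz : 0 < z.re) (n : ℕ) :
    poch z n / poch (z + 1) n = z / (z + n) := by
  unfold poch
  have hz0 : z ≠ 0 := fun h => by simp [h] at hz
  have hG : Complex.Gamma z ≠ 0 := Complex.Gamma_ne_zero_of_re_pos hz
  have hGn : Complex.Gamma (z + n) ≠ 0 := by
    apply Complex.Gamma_ne_zero_of_re_pos
    simp only [Complex.add_re, Complex.natCast_re]
    have : (0:ℝ) ≤ (n:ℝ) := Nat.cast_nonneg n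
    linarith
  have hzn : z + (n:ℂ) ≠ 0 := add_nat_ne_zero hz n
  rw [show z + 1 + (n:ℂ) = (z + n) + 1 by ring, Complex.Gamma_add_one _ hzn,
    Complex.Gamma_add_one _ hz0]
  field_simp

lemma poch_ne_zero {z : ℂ} (hz : 0 < z.re) (n : ℕ) : poch z n ≠ 0 := by
  unfold poch
  refine div_ne_zero (Complex.Gamma_ne_zero_of_re_pos ?_) (Complex.Gamma_ne_zero_of_re_pos hz)
  simp only [Complex.add_re, Complex.natCast_re]
  have : (0:ℝ) ≤ (n:ℝ) := Nat.cast_nonneg n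
  linarith

lemma aux_alg (x p u v F Q G c A B : ℂ) (hu : u ≠ 0) (hv : v ≠ 0) (hF : F ≠ 0)
    (hQ : Q ≠ 0) (hG : G ≠ 0) :
    x * p / u * (u / v / (F / (Q * G)) * (c * A * B / Q) / G) = c * (A * x) / F * (p * B / v) := by
  field_simp

lemma term_eq (s : ℂ) (hs : s.re < 0) (α d : ℝ) (hα : 0 < α) (hd : 0 < d) (n : ℕ) :
    (α : ℂ) * (d : ℂ) ^ (1 - s) / (1 - s) *
        (poch ((1 - s) / 2) n / (poch (3 / 2) n * poch (1 + (1 - s) / 2) n) *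
          (-(α : ℂ) ^ 2 * (d : ℂ) ^ 2 / 4) ^ n / (n.factorial : ℂ)) =
      ((-1)^n * (α:ℂ)^(2*n+1) / (((2*n+1).factorial : ℕ) : ℂ)) *
        ((d : ℂ) ^ ((2*n : ℂ) - s + 1) / ((2*n : ℂ) - s + 1)) := by
  have hd0 : (d:ℂ) ≠ 0 := Complex.ofReal_ne_zero.2 hd.ne'
  have hz : 0 < ((1 - s)/2).re := by
    have : ((1 - s)/2).re = (1 - s.re)/2 := by
      simp [Complex.div_re, Complex.sub_re, Complex.normSq]
    rw [this]; linarith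
  have hz1 : 0 < ((1 - s)/2 + 1).re := by
    simp only [Complex.add_re, Complex.one_re]; linarith
  have h1z : (1 : ℂ) + (1 - s)/2 = (1 - s)/2 + 1 := add_comm _ _
  have hP : poch ((1 - s)/2) n = ((1 - s)/2)/((1 - s)/2 + n) * poch ((1 - s)/2 + 1) n :=
    (div_eq_iff (poch_ne_zero hz1 n)).1 (poch_ratio hz n)
  have hdp : (d:ℂ)^((2*n:ℂ) - s + 1) = (d:ℂ)^(1-s) * ((d:ℂ)^2)^n := by
    rw [show (2*(n:ℂ)) - s + 1 = (1 - s) + ((2*n : ℕ) : ℂ) by push_cast; ring,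
      Complex.cpow_add _ _ hd0, Complex.cpow_natCast, pow_mul]
  have h1s : (1:ℂ) - s ≠ 0 := by
    intro h
    have := congrArg Complex.re h
    simp only [Complex.sub_re, Complex.one_re, Complex.zero_re] at this
    linarith
  have hzn : (1 - s)/2 + (n:ℂ) ≠ 0 := add_nat_ne_zero hz n
  have h2ns : (2*(n:ℂ)) - s + 1 ≠ 0 := by
    intro h
    have := congrArg Complex.re h
    simp only [Complex.add_re, Complex.sub_re, Complex.one_re, Complex.zero_re,
      Complex.mul_re, Complex.natCast_re, Complex.natCast_im] at this
    have hn : (0:ℝ) ≤ (n:ℝ) := Nat.cast_nonneg n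
    norm_num at this
    linarith
  have hRne : poch ((1 - s)/2 + 1) n ≠ 0 := poch_ne_zero hz1 n
  have hf1 : (((2*n+1).factorial : ℕ) : ℂ) ≠ 0 := Nat.cast_ne_zero.2 (Nat.factorial_ne_zero _)
  have hf2 : ((n.factorial : ℕ) : ℂ) ≠ 0 := Nat.cast_ne_zero.2 (Nat.factorial_ne_zero _)
  have h4 : (4:ℂ)^n ≠ 0 := by norm_num
  have h2 : (2:ℂ) ≠ 0 := two_ne_zero
  have h1s2n : (1 - s) + 2*(n:ℂ) ≠ 0 := by
    intro h
    apply hzn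
    rw [show (1-s)/2 + (n:ℂ) = ((1-s) + 2*n)/2 by ring, h, zero_div]
  have hkey : poch ((1-s)/2) n / (poch (3/2) n * poch ((1-s)/2 + 1) n)
      = (1 - s) / ((1-s) + 2*(n:ℂ)) / ((((2*n+1).factorial : ℕ) : ℂ) / ((4:ℂ)^n * (n.factorial : ℕ))) := by
    rw [hP, poch_three_halves, mul_div_mul_right _ _ hRne]
    congr 1
    rw [div_div]
    congr 1
    ring
  have hw : (-(α:ℂ)^2 * (d:ℂ)^2 / 4)^n = (-1)^n * ((α:ℂ)^2)^n * ((d:ℂ)^2)^n / (4:ℂ)^n := by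
    rw [div_pow, show -(α:ℂ)^2*(d:ℂ)^2 = (-1) * ((α:ℂ)^2 * (d:ℂ)^2) by ring, mul_pow, mul_pow,
      mul_assoc]
  have hα2 : (α:ℂ)^(2*n+1) = ((α:ℂ)^2)^n * (α:ℂ) := by rw [pow_succ, pow_mul]
  rw [h1z, hkey, hdp, hw, hα2, show (2*(n:ℂ)) - s + 1 = 1 - s + 2*(n:ℂ) by ring]
  exact aux_alg _ _ _ _ _ _ _ _ _ _ h1s h1s2n hf1 h4 hf2

open MeasureTheory

/-- For `Re s < 0`, `α > 0`, `d > 0`: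
`∫_0^d sin(αx) x^{-s-1} dx = (α d^{1-s}/(1-s)) ₁F₂((1-s)/2; 3/2, 1+(1-s)/2; -α²d²/4)`. -/
theorem integral_sin_eq_oneF2 (s : ℂ) (hs : s.re < 0) (α d : ℝ)
    (hα : 0 < α) (hd : 0 < d) :
    ∫ x in (0 : ℝ)..d, ((Real.sin (α * x) : ℝ) : ℂ) * (x : ℂ) ^ (-s - 1) =
      (α : ℂ) * (d : ℂ) ^ (1 - s) / (1 - s) *
        ∑' n : ℕ, poch ((1 - s) / 2) n /
            (poch (3 / 2) n * poch (1 + (1 - s) / 2) n) *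
          (-(α : ℂ) ^ 2 * (d : ℂ) ^ 2 / 4) ^ n / (n.factorial : ℂ) := by
  have hd0 : (d:ℂ) ≠ 0 := Complex.ofReal_ne_zero.2 hd.ne'
  set e : ℝ := -s.re - 1 with he
  have he1 : -1 < e := by rw [he]; linarith
  set f : ℕ → ℝ → ℂ := fun n x =>
    (-1)^n * (((α*x : ℝ) : ℂ))^(2*n+1) / (((2*n+1).factorial : ℕ) : ℂ) * (x:ℂ)^(-s-1) with hf
  have hre : ∀ n : ℕ, (2*(n:ℂ) - s).re = 2*n + e + 1 := by
    intro n
    simp only [Complex.sub_re, Complex.mul_re, Complex.natCast_re, Complex.natCast_im,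
      Complex.re_ofNat, Complex.im_ofNat, he]
    ring
  have hsum : Set.EqOn (fun x : ℝ => ((Real.sin (α*x) : ℝ) : ℂ) * (x:ℂ)^(-s-1))
      (fun x : ℝ => ∑' n, f n x) (Set.Ioc 0 d) := by
    intro x hx
    have h := (Complex.hasSum_sin ((α*x : ℝ) : ℂ)).mul_right ((x:ℂ)^(-s-1))
    rw [← Complex.ofReal_sin] at h
    exact h.tsum_eq.symm
  have hfg : ∀ n : ℕ, Set.EqOn (f n)
      (fun x : ℝ => ((-1)^n * (α:ℂ)^(2*n+1) / (((2*n+1).factorial : ℕ) : ℂ)) *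
        (x:ℂ)^(2*(n:ℂ) - s)) (Set.Ioc 0 d) := by
    intro n x hx
    have hx0 : (x:ℂ) ≠ 0 := Complex.ofReal_ne_zero.2 (ne_of_gt hx.1)
    simp only [hf]
    push_cast
    rw [mul_pow]
    rw [show 2*(n:ℂ) - s = ((2*n+1 : ℕ) : ℂ) + (-s-1) by push_cast; ring,
      Complex.cpow_add _ _ hx0, Complex.cpow_natCast]
    push_cast
    ring
  have hint : ∀ n : ℕ, IntegrableOn (f n) (Set.Ioc 0 d) := by
    intro n
    have hg : IntegrableOn (fun x : ℝ => (x:ℂ)^(2*(n:ℂ) - s)) (Set.Ioc 0 d) := by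
      rw [← intervalIntegrable_iff_integrableOn_Ioc_of_le hd.le]
      apply intervalIntegral.intervalIntegrable_cpow
      left
      rw [hre n]
      have : (0:ℝ) ≤ (n:ℝ) := Nat.cast_nonneg n
      linarith
    have hgc : IntegrableOn (fun x : ℝ => ((-1)^n * (α:ℂ)^(2*n+1) / (((2*n+1).factorial : ℕ) : ℂ)) *
        (x:ℂ)^(2*(n:ℂ) - s)) (Set.Ioc 0 d) := hg.const_mul _
    exact hgc.congr_fun (fun x hx => ((hfg n) hx).symm) measurableSet_Ioc
  have hval : ∀ n : ℕ, ∫ x in Set.Ioc (0:ℝ) d, f n x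
      = ((-1)^n * (α:ℂ)^(2*n+1) / (((2*n+1).factorial : ℕ) : ℂ)) *
        ((d:ℂ)^(2*(n:ℂ) - s + 1) / (2*(n:ℂ) - s + 1)) := by
    intro n
    rw [setIntegral_congr_fun measurableSet_Ioc (hfg n), MeasureTheory.integral_const_mul,
      ← intervalIntegral.integral_of_le hd.le,
      integral_cpow (Or.inl (by rw [hre n]; linarith))]
    have hne : 2*(n:ℂ) - s + 1 ≠ 0 := by
      intro h
      have h2 := congrArg Complex.re h
      rw [Complex.add_re, hre n, Complex.one_re, Complex.zero_re] at h2
      have : (0:ℝ) ≤ (n:ℝ) := Nat.cast_nonneg n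
      linarith
    rw [Complex.ofReal_zero, Complex.zero_cpow hne, sub_zero]
  have hnormval : ∀ n : ℕ, ∫ x in Set.Ioc (0:ℝ) d, ‖f n x‖
      = α^(2*n+1) / ((2*n+1).factorial : ℝ) *
        (d ^ ((2*n+1 : ℝ) + e + 1) / ((2*n+1 : ℝ) + e + 1)) := by
    intro n
    have h1 : Set.EqOn (fun x => ‖f n x‖)
        (fun x : ℝ => α^(2*n+1) / ((2*n+1).factorial : ℝ) * x ^ ((2*n+1 : ℝ) + e))
        (Set.Ioc 0 d) := by
      intro x hx
      have hx0 : 0 < x := hx.1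
      have hax : 0 < α * x := by positivity
      have hxp : x ^ (2*n+1) * x ^ e = x ^ ((2*n+1 : ℝ) + e) := by
        rw [← Real.rpow_natCast x (2*n+1), ← Real.rpow_add hx0]
        norm_num
      simp only [hf, norm_mul, norm_div, norm_pow,
        Complex.norm_real, Real.norm_eq_abs, Complex.norm_natCast, norm_neg, norm_one, one_pow, one_mul]
      rw [Complex.norm_cpow_eq_rpow_re_of_pos hx0]
      have hres : (-s - 1).re = e := by simp [he, Complex.sub_re, Complex.neg_re]
      rw [hres, abs_of_pos hα, abs_of_pos hx0, mul_pow]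
      rw [show α ^ (2*n+1) * x ^ (2*n+1) / (((2*n+1).factorial : ℕ) : ℝ) * x ^ e
          = α ^ (2*n+1) / (((2*n+1).factorial : ℕ) : ℝ) * (x ^ (2*n+1) * x ^ e) by ring, hxp]
    rw [setIntegral_congr_fun measurableSet_Ioc h1, MeasureTheory.integral_const_mul,
      ← intervalIntegral.integral_of_le hd.le,
      integral_rpow (Or.inl (by linarith))]
    rw [Real.zero_rpow (by linarith), sub_zero]
  have hsummable : Summable (fun n => ∫ x in Set.Ioc (0:ℝ) d, ‖f n x‖) := by
    have hinj : Function.Injective (fun n : ℕ => 2*n+1) := fun a b h => by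
      simp only [] at h; omega
    have hb0 : Summable (fun n : ℕ => (α*d)^(2*n+1) / ((2*n+1).factorial : ℝ)) :=
      (Real.summable_pow_div_factorial (α*d)).comp_injective hinj
    have hb : Summable (fun n : ℕ =>
        (d ^ (e+1) / (e+1)) * ((α*d)^(2*n+1) / ((2*n+1).factorial : ℝ))) := hb0.mul_left _
    apply Summable.of_nonneg_of_le ?_ ?_ hb
    · intro n
      exact MeasureTheory.integral_nonneg fun x => norm_nonneg _
    · intro n
      rw [hnormval n, mul_pow]
      have h2n : (0:ℝ) ≤ (n:ℝ) := Nat.cast_nonneg n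
      have hsplit : d ^ ((2*n+1 : ℝ) + e + 1) = d^(2*n+1) * d ^ (e+1) := by
        rw [show (2*n+1 : ℝ) + e + 1 = ((2*n+1 : ℕ) : ℝ) + (e+1) by push_cast; ring,
          Real.rpow_add hd, Real.rpow_natCast]
      have key : d ^ ((2*n+1 : ℝ) + e + 1) / ((2*n+1 : ℝ) + e + 1) ≤ d^(2*n+1) * (d^(e+1)/(e+1)) := by
        rw [hsplit, mul_div_assoc]
        exact mul_le_mul_of_nonneg_left
          (div_le_div_of_nonneg_left (by positivity) (by linarith) (by linarith)) (by positivity)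
      calc α^(2*n+1) / (((2*n+1).factorial : ℕ) : ℝ) * (d ^ ((2*n+1 : ℝ) + e + 1) / ((2*n+1 : ℝ) + e + 1))
          ≤ α^(2*n+1) / (((2*n+1).factorial : ℕ) : ℝ) * (d^(2*n+1) * (d^(e+1)/(e+1))) := by
            apply mul_le_mul_of_nonneg_left key (by positivity)
        _ = d ^ (e+1) / (e+1) * (α^(2*n+1) * d^(2*n+1) / (((2*n+1).factorial : ℕ) : ℝ)) := by ring
  rw [intervalIntegral.integral_of_le hd.le, setIntegral_congr_fun measurableSet_Ioc hsum,
    ← MeasureTheory.integral_tsum_of_summable_integral_norm hint hsummable,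
    ← tsum_mul_left]
  exact tsum_congr fun n => (hval n).trans (term_eq s hs α d hα hd n).symm
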